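/- Let Δ be the root system of type A_n realized as {e_i - e_j : 0 ≤ i ≠ j ≤ n} ⊆ ℤ^{n+1}. Then the sets Δ_i := {e_j - e_i : 0 ≤ j ≤ n, j ≠ i} for 0 ≤ i ≤ n form a partition of Δ into n+1 parts such that each Δ_i is closed and each union Δ_i ∪ Δ_j (i ≠ j) is closed. -/
import Mathlib


/-- Standard basis vector `e i` in `ℤ^{n+1}`. -/
def eb {n : ℕ} (i : Fin n) : Fin n → ℤ := fun k => if k = i then 1 else 0

/-- The root system of type `A_n`, realized as `{e_i - e_j : i ≠ j}` in `ℤ^{n+1}`. -/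
def rootsA (n : ℕ) : Set (Fin (n + 1) → ℤ) :=
  {v | ∃ i j : Fin (n + 1), i ≠ j ∧ v = eb i - eb j}

/-- A subset `S` of a root system `Δ` is closed if `α, β ∈ S` and `α + β ∈ Δ`
imply `α + β ∈ S`. -/
def RootClosed (Δ S : Set (Fin (n + 1) → ℤ)) : Prop :=
  ∀ a ∈ S, ∀ b ∈ S, a + b ∈ Δ → a + b ∈ S

/-- The `i`-th part of the row partition: `Δ_i = {e_j - e_i : j ≠ i}`. -/
def rowPart (n : ℕ) (i : Fin (n + 1)) : Set (Fin (n + 1) → ℤ) :=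
  {v | ∃ j : Fin (n + 1), j ≠ i ∧ v = eb j - eb i}

lemma mixed {n : ℕ} (i j k l : Fin (n + 1)) (hij : i ≠ j) (hk : k ≠ i) (hl : l ≠ j)
    (hroot : (eb k - eb i) + (eb l - eb j) ∈ rootsA n) :
    (eb k - eb i) + (eb l - eb j) ∈ rowPart n i ∪ rowPart n j := by
  obtain ⟨p, q, hpq, hpqe⟩ := hroot
  by_cases hkj : k = j
  · by_cases hli : l = i
    · exfalso
      have := congrFun hpqe p
      subst hkj hli
      simp only [Pi.add_apply, Pi.sub_apply, eb] at this
      split_ifs at this <;> omega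
    · left
      refine ⟨l, hli, ?_⟩
      subst hkj
      funext x
      simp only [Pi.add_apply, Pi.sub_apply, eb]
      split_ifs <;> omega
  · by_cases hli : l = i
    · right
      refine ⟨k, hkj, ?_⟩
      subst hli
      funext x
      simp only [Pi.add_apply, Pi.sub_apply, eb]
      split_ifs <;> omega
    · exfalso
      by_cases hkl : k = l
      · have := congrFun hpqe k
        subst hkl
        simp only [Pi.add_apply, Pi.sub_apply, eb] at this
        split_ifs at this <;> simp_all <;> omega
      · have h1 := congrFun hpqe k
        have h2 := congrFun hpqe l
        simp only [Pi.add_apply, Pi.sub_apply, eb] at h1 h2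
        split_ifs at h1 h2 <;> simp_all <;> omega

theorem stmt0 (n : ℕ) :
    (⋃ i, rowPart n i) = rootsA n ∧
    (Pairwise fun i j => Disjoint (rowPart n i) (rowPart n j)) ∧
    (∀ i, RootClosed (rootsA n) (rowPart n i)) ∧
    (∀ i j, i ≠ j → RootClosed (rootsA n) (rowPart n i ∪ rowPart n j)) := by
  refine ⟨?_, ?_, ?_, ?_⟩
  · ext v
    simp only [Set.mem_iUnion, rowPart, rootsA, Set.mem_setOf_eq]
    constructor
    · rintro ⟨i, j, hji, rfl⟩
      exact ⟨j, i, hji, rfl⟩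
    · rintro ⟨i, j, hij, rfl⟩
      exact ⟨j, i, hij, rfl⟩
  · intro i j hij
    rw [Set.disjoint_left]
    rintro v ⟨k, hk, rfl⟩ ⟨l, hl, hle⟩
    apply hij
    have h1 := congrFun hle i
    have h2 := congrFun hle j
    simp only [Pi.sub_apply, eb] at h1 h2
    split_ifs at h1 h2 <;> simp_all
  · rintro i a ⟨j, hj, rfl⟩ b ⟨k, hk, rfl⟩ ⟨p, q, hpq, hpqe⟩
    exfalso
    have := congrFun hpqe i
    simp only [Pi.add_apply, Pi.sub_apply, eb] at this
    split_ifs at this <;> simp_all <;> omega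
  · rintro i j hij a (⟨k, hk, rfl⟩ | ⟨k, hk, rfl⟩) b (⟨l, hl, rfl⟩ | ⟨l, hl, rfl⟩) hroot
    · exfalso
      obtain ⟨p, q, hpq, hpqe⟩ := hroot
      have := congrFun hpqe i
      simp only [Pi.add_apply, Pi.sub_apply, eb] at this
      split_ifs at this <;> simp_all <;> omega
    · exact mixed i j k l hij hk hl hroot
    · exact (mixed j i k l hij.symm hk hl hroot).elim Or.inr Or.inl
    · exfalso
      obtain ⟨p, q, hpq, hpqe⟩ := hroot
      have := congrFun hpqe j
      simp only [Pi.add_apply, Pi.sub_apply, eb] at this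
      split_ifs at this <;> simp_all <;> omega
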